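/- The family {P_ψ[x]}_{x ∈ K} is abelian: for all x, y ∈ K one has P_ψ[x]·P_ψ[y] = P_ψ[y]·P_ψ[x] as n×n matrices. -/

import Mathlib

/-- The ψ-binomial coefficient `C_ψ(n,k) = φ(n)/(φ(k)·φ(n−k))`. -/
noncomputable def psiBinom {K : Type*} [Field K] (φ : ℕ → K) (n k : ℕ) : K :=
  φ n / (φ k * φ (n - k))

/-- The `n×n` ψ-Pascal matrix `P_ψ[x]`. -/
noncomputable def psiPascal {K : Type*} [Field K] (φ : ℕ → K) (n : ℕ) (x : K) :
    Matrix (Fin n) (Fin n) K :=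
  Matrix.of fun i j =>
    if (j : ℕ) ≤ (i : ℕ) then x ^ ((i : ℕ) - (j : ℕ)) * psiBinom φ i j else 0

/-- Entry formula for the product of two ψ-Pascal matrices. -/
lemma psiPascal_entry {K : Type*} [Field K] (φ : ℕ → K) (hφ : ∀ n, φ n ≠ 0)
    (n : ℕ) (x y : K) (i j : Fin n) :
    (psiPascal φ n x * psiPascal φ n y) i j =
      ∑ k ∈ Finset.Icc (j : ℕ) (i : ℕ),
        x ^ ((i : ℕ) - k) * y ^ (k - (j : ℕ)) *
          (φ i / (φ j * (φ ((i : ℕ) - k) * φ (k - (j : ℕ))))) := by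
  simp only [Matrix.mul_apply, psiPascal, Matrix.of_apply]
  rw [Fin.sum_univ_eq_sum_range (fun k =>
    (if (k : ℕ) ≤ (i : ℕ) then x ^ ((i : ℕ) - k) * psiBinom φ i k else 0) *
    (if (j : ℕ) ≤ k then y ^ (k - (j : ℕ)) * psiBinom φ k j else 0))]
  rw [← Finset.sum_subset (s₁ := Finset.Icc (j : ℕ) (i : ℕ))]
  · apply Finset.sum_congr rfl
    intro k hk
    simp only [Finset.mem_Icc] at hk
    rw [if_pos hk.2, if_pos hk.1]
    unfold psiBinom
    have := hφ k
    field_simp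
  · intro k hk
    rw [Finset.mem_range]
    rw [Finset.mem_Icc] at hk
    exact lt_of_le_of_lt hk.2 i.isLt
  · intro k _ hk
    simp only [Finset.mem_Icc, not_and_or, not_le] at hk
    rcases hk with h | h
    · rw [if_neg (show ¬ (j : ℕ) ≤ k by omega)]; ring
    · rw [if_neg (show ¬ k ≤ (i : ℕ) by omega)]; ring

/-- The family `{P_ψ[x]}_{x ∈ K}` is abelian:
`P_ψ[x]·P_ψ[y] = P_ψ[y]·P_ψ[x]` for all `x, y ∈ K`. -/
theorem psiPascal_mul_comm {K : Type*} [Field K] [CharZero K]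
    (φ : ℕ → K) (h0 : φ 0 = 1) (hφ : ∀ n, φ n ≠ 0) (n : ℕ) :
    ∀ x y : K, psiPascal φ n x * psiPascal φ n y = psiPascal φ n y * psiPascal φ n x := by
  intro x y
  ext i j
  rw [psiPascal_entry φ hφ n x y i j, psiPascal_entry φ hφ n y x i j]
  by_cases hij : (j : ℕ) ≤ (i : ℕ)
  · apply Finset.sum_nbij' (i := fun k => (i : ℕ) + (j : ℕ) - k)
      (j := fun k => (i : ℕ) + (j : ℕ) - k)
    · intro k hk; simp only [Finset.mem_Icc] at *; omega
    · intro k hk; simp only [Finset.mem_Icc] at *; omega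
    · intro k hk; simp only [Finset.mem_Icc] at hk; omega
    · intro k hk; simp only [Finset.mem_Icc] at hk; omega
    · intro k hk
      simp only [Finset.mem_Icc] at hk
      have h1 : (i : ℕ) - ((i : ℕ) + (j : ℕ) - k) = k - (j : ℕ) := by omega
      have h2 : (i : ℕ) + (j : ℕ) - k - (j : ℕ) = (i : ℕ) - k := by omega
      rw [h1, h2]
      ring
  · rw [Finset.Icc_eq_empty (by omega)]
    simp
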